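/- The periodic defocusing Ablowitz-Ladik equation −i α̇_j = ρ_j²(α_{j+1} + α_{j-1}) − 2α_j (indices mod p) is the Hamiltonian flow of H = 2 Re(K_1) − 2 log(K_0) with respect to the Ablowitz-Ladik Poisson bracket, i.e. α̇_j = {α_j, H} gives exactly this equation. -/

import Mathlib

open scoped ComplexConjugate

variable {ι : Type*} [Fintype ι] [DecidableEq ι]

/-- The Wirtinger derivative `∂f/∂α_j = (∂f/∂u_j - i ∂f/∂v_j)/2` of a function
of finitely many complex variables `α_j = u_j + i v_j`. -/
noncomputable def wirtD (f : (ι → ℂ) → ℂ) (x : ι → ℂ) (j : ι) : ℂ :=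
  (fderiv ℝ f x (Pi.single j 1) - Complex.I * fderiv ℝ f x (Pi.single j Complex.I)) / 2

/-- The Wirtinger derivative `∂f/∂ᾱ_j = (∂f/∂u_j + i ∂f/∂v_j)/2`. -/
noncomputable def wirtDbar (f : (ι → ℂ) → ℂ) (x : ι → ℂ) (j : ι) : ℂ :=
  (fderiv ℝ f x (Pi.single j 1) + Complex.I * fderiv ℝ f x (Pi.single j Complex.I)) / 2

/-- The Ablowitz–Ladik Poisson bracket
`{f,g} = i Σ_j ρ_j² [ (∂f/∂ᾱ_j)(∂g/∂α_j) − (∂f/∂α_j)(∂g/∂ᾱ_j) ]`,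
with `ρ_j² = 1 - |α_j|²`. -/
noncomputable def alPB (f g : (ι → ℂ) → ℂ) (x : ι → ℂ) : ℂ :=
  Complex.I * ∑ j, ((1 - ‖x j‖ ^ 2 : ℝ) : ℂ) *
    (wirtDbar f x j * wirtD g x j - wirtD f x j * wirtDbar g x j)


section Aux
open ContinuousLinearMap Finset
variable (p : ℕ) [NeZero p]

noncomputable def Kd (x : ZMod p → ℂ) : (ZMod p → ℂ) →L[ℝ] ℂ :=
  -∑ m : ZMod p, (x (m-1) • ((Complex.conjCLE : ℂ →L[ℝ] ℂ).comp (proj m))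
        + conj (x m) • (proj (m-1) : (ZMod p → ℂ) →L[ℝ] ℂ))

noncomputable def gd (x : ZMod p → ℂ) (m : ZMod p) : (ZMod p → ℂ) →L[ℝ] ℝ :=
  -(Complex.reCLM.comp (x m • ((Complex.conjCLE : ℂ →L[ℝ] ℂ).comp (proj m))
      + conj (x m) • (proj m : (ZMod p → ℂ) →L[ℝ] ℂ)))

noncomputable def Pd (x : ZMod p → ℂ) : (ZMod p → ℂ) →L[ℝ] ℝ :=
  ∑ m : ZMod p, (∏ k ∈ univ.erase m, (1 - ‖x k‖^2)) • gd p x m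

noncomputable def Ld (x : ZMod p → ℂ) : (ZMod p → ℂ) →L[ℝ] ℂ :=
  Complex.ofRealCLM.comp
    ((2:ℝ) • (Complex.reCLM.comp (Kd p x))
      - (2:ℝ) • ((∏ m : ZMod p, (1 - ‖x m‖^2))⁻¹ • Pd p x))

theorem Kd_single (x : ZMod p → ℂ) (j : ZMod p) (v : ℂ) :
    Kd p x (Pi.single j v) = -(x (j-1) * conj v + conj (x (j+1)) * v) := by
  have h1 : ∑ m : ZMod p, x (m-1) * conj ((Pi.single j v : ZMod p → ℂ) m) = x (j-1) * conj v := by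
    rw [Fintype.sum_eq_single j]
    · simp
    · intro m hm; simp [Pi.single_apply, hm]
  have h2 : ∑ m : ZMod p, conj (x m) * ((Pi.single j v : ZMod p → ℂ) (m-1)) = conj (x (j+1)) * v := by
    rw [Fintype.sum_eq_single (j+1)]
    · have : j + 1 - 1 = j := by ring
      rw [this, Pi.single_eq_same]
    · intro m hm
      have : m - 1 ≠ j := fun h => hm (by rw [← h]; ring)
      simp [Pi.single_apply, this]
  simp only [Kd, neg_apply, ContinuousLinearMap.sum_apply, add_apply, smul_apply, comp_apply,
    ContinuousLinearEquiv.coe_coe, proj_apply, Complex.conjCLE_apply, smul_eq_mul,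
    Finset.sum_add_distrib, h1, h2]

theorem gd_single_self (x : ZMod p → ℂ) (j : ZMod p) (v : ℂ) :
    gd p x j (Pi.single j v) = -(x j * conj v + conj (x j) * v).re := by
  simp [gd]

theorem gd_single_ne (x : ZMod p → ℂ) (m j : ZMod p) (hm : m ≠ j) (v : ℂ) :
    gd p x m (Pi.single j v) = 0 := by
  simp [gd, Pi.single_apply, hm]

theorem Pd_single (x : ZMod p → ℂ) (j : ZMod p) (v : ℂ) :
    Pd p x (Pi.single j v) = (∏ k ∈ univ.erase j, (1 - ‖x k‖^2))
      * (-(x j * conj v + conj (x j) * v).re) := by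
  simp only [Pd, ContinuousLinearMap.sum_apply, ContinuousLinearMap.smul_apply, smul_eq_mul]
  rw [Fintype.sum_eq_single j]
  · rw [gd_single_self]
  · intro m hm; rw [gd_single_ne p x m j hm]; ring

theorem Ld_single (x : ZMod p → ℂ) (hx : ∀ m, ‖x m‖ < 1) (j : ZMod p) (v : ℂ) :
    Ld p x (Pi.single j v) =
      ((2 * (-(x (j-1) * conj v + conj (x (j+1)) * v)).re
        - 2 * ((1 - ‖x j‖^2)⁻¹ * (-(x j * conj v + conj (x j) * v).re)) : ℝ) : ℂ) := by
  have hB : ∀ m, (0:ℝ) < 1 - ‖x m‖^2 := by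
    intro m; nlinarith [hx m, norm_nonneg (x m)]
  have hcancel : (∏ m : ZMod p, (1 - ‖x m‖^2))⁻¹
      * (∏ k ∈ univ.erase j, (1 - ‖x k‖^2)) = (1 - ‖x j‖^2)⁻¹ := by
    have h0 : (∏ k ∈ univ.erase j, (1 - ‖x k‖^2)) ≠ 0 :=
      (Finset.prod_pos fun m _ => hB m).ne'
    rw [← Finset.mul_prod_erase univ _ (mem_univ j), mul_inv, mul_assoc,
      inv_mul_cancel₀ h0, mul_one]
  have hc2 : ∀ V : ℝ, (∏ m : ZMod p, (1 - ‖x m‖^2))⁻¹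
      * ((∏ k ∈ univ.erase j, (1 - ‖x k‖^2)) * V)
      = (1 - ‖x j‖^2)⁻¹ * V := by
    intro V; rw [← mul_assoc, hcancel]
  simp only [Ld, comp_apply, sub_apply, ContinuousLinearMap.smul_apply, smul_eq_mul,
    Kd_single, Pd_single, Complex.ofRealCLM_apply, Complex.reCLM_apply]
  rw [hc2]

theorem hasFDerivAt_g (x : ZMod p → ℂ) (m : ZMod p) :
    HasFDerivAt (fun y : ZMod p → ℂ => (1 - ‖y m‖^2 : ℝ)) (gd p x m) x := by
  have h : (fun y : ZMod p → ℂ => (1 - ‖y m‖^2 : ℝ))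
      = fun y : ZMod p → ℂ => 1 - ((y m) * conj (y m)).re := by
    funext y; rw [Complex.mul_conj]; simp [Complex.sq_norm]
  rw [h]
  exact ((Complex.reCLM.hasFDerivAt.comp x
    ((hasFDerivAt_apply m x).mul
      (((Complex.conjCLE : ℂ →L[ℝ] ℂ).hasFDerivAt).comp x (hasFDerivAt_apply m x))))).const_sub 1

theorem hasFDerivAt_H (x : ZMod p → ℂ) (hx : ∀ m, ‖x m‖ < 1) :
    HasFDerivAt (fun y : ZMod p → ℂ =>
      ((2 * (-∑ m : ZMod p, y (m - 1) * conj (y m)).re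
          - 2 * Real.log (∏ m : ZMod p, (1 - ‖y m‖ ^ 2)) : ℝ) : ℂ))
      (Ld p x) x := by
  have hB : ∀ m, (0:ℝ) < 1 - ‖x m‖^2 := by
    intro m
    nlinarith [hx m, norm_nonneg (x m)]
  have hP0 : (∏ m : ZMod p, (1 - ‖x m‖^2)) ≠ 0 :=
    (Finset.prod_pos fun m _ => hB m).ne'
  have hK : HasFDerivAt (fun y : ZMod p → ℂ => -∑ m : ZMod p, y (m - 1) * conj (y m))
      (Kd p x) x := by
    apply HasFDerivAt.neg
    apply HasFDerivAt.fun_sum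
    intro m _
    exact (hasFDerivAt_apply (m-1) x).mul
      (((Complex.conjCLE : ℂ →L[ℝ] ℂ).hasFDerivAt).comp x (hasFDerivAt_apply m x))
  have hP : HasFDerivAt (fun y : ZMod p → ℂ => ∏ m : ZMod p, (1 - ‖y m‖^2))
      (Pd p x) x := HasFDerivAt.finset_prod (fun m _ => hasFDerivAt_g p x m)
  have hlog : HasFDerivAt
      (fun y : ZMod p → ℂ => Real.log (∏ m : ZMod p, (1 - ‖y m‖^2)))
      ((∏ m : ZMod p, (1 - ‖x m‖^2))⁻¹ • Pd p x) x := by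
    have := (Real.hasDerivAt_log hP0).comp_hasFDerivAt x hP
    exact this
  have hre : HasFDerivAt
      (fun y : ZMod p → ℂ => (-∑ m : ZMod p, y (m - 1) * conj (y m)).re)
      (Complex.reCLM.comp (Kd p x)) x := Complex.reCLM.hasFDerivAt.comp x hK
  have hmain : HasFDerivAt (fun y : ZMod p → ℂ =>
      (2 * (-∑ m : ZMod p, y (m - 1) * conj (y m)).re
        - 2 * Real.log (∏ m : ZMod p, (1 - ‖y m‖ ^ 2)) : ℝ))
      ((2:ℝ) • (Complex.reCLM.comp (Kd p x))
        - (2:ℝ) • ((∏ m : ZMod p, (1 - ‖x m‖^2))⁻¹ • Pd p x)) x := by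
    simpa [smul_smul] using (hre.const_mul 2).fun_sub (hlog.const_mul 2)
  exact Complex.ofRealCLM.hasFDerivAt.comp x hmain

end Aux

open ContinuousLinearMap Finset in
/-- The periodic defocusing Ablowitz–Ladik equation
`−i α̇_j = ρ_j²(α_{j+1} + α_{j-1}) − 2α_j` (indices mod `p`) is the Hamiltonian
flow of `H = 2 Re(K_1) − 2 log(K_0)` for the Ablowitz–Ladik Poisson bracket,
where `K_1 = −Σ_j α_{j-1} conj(α_j)` and `K_0 = ∏_j (1 - |α_j|²)`: the
substitution `α̇_j = {α_j, H}` gives exactly this equation. -/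
theorem alPB_AL_hamiltonian_flow (p : ℕ) [NeZero p] (x : ZMod p → ℂ)
    (hx : ∀ j, ‖x j‖ < 1) (j : ZMod p) :
    -Complex.I * alPB (fun y => y j)
        (fun y => ((2 * (-∑ m : ZMod p, y (m - 1) * conj (y m)).re
            - 2 * Real.log (∏ m : ZMod p, (1 - ‖y m‖ ^ 2)) : ℝ) : ℂ)) x
      = ((1 - ‖x j‖ ^ 2 : ℝ) : ℂ) * (x (j + 1) + x (j - 1)) - 2 * x j := by
  have hf : fderiv ℝ (fun y : ZMod p → ℂ => y j) x = proj j := (hasFDerivAt_apply j x).fderiv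
  have hH : fderiv ℝ (fun y : ZMod p → ℂ =>
      ((2 * (-∑ m : ZMod p, y (m - 1) * conj (y m)).re
          - 2 * Real.log (∏ m : ZMod p, (1 - ‖y m‖ ^ 2)) : ℝ) : ℂ)) x = Ld p x :=
    (hasFDerivAt_H p x hx).fderiv
  have hB : ∀ m, (0:ℝ) < 1 - ‖x m‖^2 := by
    intro m; nlinarith [hx m, norm_nonneg (x m)]
  simp only [alPB, wirtD, wirtDbar, hf, hH]
  rw [Fintype.sum_eq_single j]
  · simp only [proj_apply, Pi.single_eq_same, Ld_single p x hx, map_one, Complex.conj_I]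
    have hr := (hB j).ne'
    set r : ℝ := 1 - ‖x j‖^2 with hrdef
    set a := x (j-1); set b := x (j+1); set c := x j
    have hI : (1 : ℂ) + Complex.I * Complex.I = 0 := by
      rw [Complex.I_mul_I]; ring
    apply Complex.ext <;>
      simp [Complex.ext_iff, Complex.div_re, Complex.div_im, Complex.normSq_apply,
        Complex.mul_re, Complex.mul_im, Complex.add_re, Complex.add_im, Complex.I_re,
        Complex.I_im, Complex.sub_re, Complex.sub_im, Complex.neg_re, Complex.neg_im,
        Complex.ofReal_re, Complex.ofReal_im, Complex.one_re, Complex.one_im] <;>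
      field_simp <;> ring
  · intro k hk
    simp only [proj_apply, Pi.single_apply, if_neg (Ne.symm hk)]
    ring
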